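/- Let A be an abelian category and H an ICE-closed subcategory of A. Then the class α(H) = {M ∈ H : for every morphism f: N → M with N ∈ H, ker f ∈ H} is a wide subcategory of A, i.e. closed under kernels, cokernels, and extensions. -/

import Mathlib

open CategoryTheory CategoryTheory.Limits

/-- The class `α(H)` associated to a class of objects `H` of an abelian category. -/
def alphaSet {A : Type*} [Category A] [Abelian A] (H : Set A) : Set A :=
  {M | M ∈ H ∧ ∀ (N : A) (f : N ⟶ M), N ∈ H → kernel f ∈ H}

section Aux
universe v
variable {A : Type*} [Category.{v} A] [Abelian A]

/-- The kernel of the restriction of `g` to `kernel (g ≫ p)` is the kernel of `g`. -/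
noncomputable def kerRestrictIso {N M P : A} (g : N ⟶ M) (p : M ⟶ P) :
    kernel (kernel.ι (g ≫ p) ≫ g) ≅ kernel g where
  hom := kernel.lift g (kernel.ι _ ≫ kernel.ι (g ≫ p))
    (by rw [Category.assoc, kernel.condition])
  inv := kernel.lift _ (kernel.lift (g ≫ p) (kernel.ι g)
      (by rw [← Category.assoc, kernel.condition, zero_comp]))
    (by rw [← Category.assoc, kernel.lift_ι, kernel.condition])
  hom_inv_id := by
    apply equalizer.hom_ext
    rw [← cancel_mono (kernel.ι (g ≫ p))]
    simp
  inv_hom_id := by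
    apply equalizer.hom_ext
    simp

/-- The kernel of the first projection of a pullback is the kernel of the other leg. -/
noncomputable def kernelPullbackFstIso {N Y C : A} (g : N ⟶ C) (π : Y ⟶ C) :
    kernel (pullback.fst g π) ≅ kernel π where
  hom := kernel.lift π (kernel.ι _ ≫ pullback.snd g π)
    (by rw [Category.assoc, ← pullback.condition, ← Category.assoc, kernel.condition, zero_comp])
  inv := kernel.lift _ (pullback.lift 0 (kernel.ι π) (by simp))
    (by rw [pullback.lift_fst])
  hom_inv_id := by
    apply equalizer.hom_ext
    apply pullback.hom_ext
    · simp; rw [pullback.lift_fst]; simp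
    · simp; rw [pullback.lift_snd]; simp
  inv_hom_id := by
    apply equalizer.hom_ext
    simp
    rw [pullback.lift_snd]

/-- The kernel of the second projection of a pullback is the kernel of the other leg. -/
noncomputable def kernelPullbackSndIso {N Y C : A} (g : N ⟶ C) (π : Y ⟶ C) :
    kernel (pullback.snd g π) ≅ kernel g where
  hom := kernel.lift g (kernel.ι _ ≫ pullback.fst g π)
    (by rw [Category.assoc, pullback.condition, ← Category.assoc, kernel.condition, zero_comp])
  inv := kernel.lift _ (pullback.lift (kernel.ι g) 0 (by simp))
    (by rw [pullback.lift_snd])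
  hom_inv_id := by
    apply equalizer.hom_ext
    apply pullback.hom_ext
    · simp; rw [pullback.lift_fst]; simp
    · simp; rw [pullback.lift_snd]; simp
  inv_hom_id := by
    apply equalizer.hom_ext
    simp
    rw [pullback.lift_fst]

end Aux

theorem alpha_of_ICE_closed_is_wide
    {A : Type*} [Category A] [Abelian A] (H : Set A)
    (hiso : ∀ (X Y : A), X ∈ H → (X ≅ Y) → Y ∈ H)
    (himage : ∀ (X Y : A) (f : X ⟶ Y), X ∈ H → Y ∈ H → image f ∈ H)
    (hcoker : ∀ (X Y : A) (f : X ⟶ Y), X ∈ H → Y ∈ H → cokernel f ∈ H)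
    (hext : ∀ (S : ShortComplex A), S.ShortExact → S.X₁ ∈ H → S.X₃ ∈ H → S.X₂ ∈ H) :
    (∀ (X Y : A) (f : X ⟶ Y), X ∈ alphaSet H → Y ∈ alphaSet H → kernel f ∈ alphaSet H) ∧
    (∀ (X Y : A) (f : X ⟶ Y), X ∈ alphaSet H → Y ∈ alphaSet H → cokernel f ∈ alphaSet H) ∧
    (∀ (S : ShortComplex A), S.ShortExact →
      S.X₁ ∈ alphaSet H → S.X₃ ∈ alphaSet H → S.X₂ ∈ alphaSet H) := by
  refine ⟨?_, ?_, ?_⟩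
  · -- kernels
    intro X Y f hX hY
    refine ⟨hY.2 X f hX.1, ?_⟩
    intro N g hN
    exact hiso _ _ (hX.2 N (g ≫ kernel.ι f) hN) (kernelCompMono g (kernel.ι f))
  · -- cokernels
    intro X Y f hX hY
    refine ⟨hcoker X Y f hX.1 hY.1, ?_⟩
    intro N g hN
    set π := cokernel.π f with hπ
    have hker : kernel π ∈ H :=
      hiso _ _ (himage X Y f hX.1 hY.1) (Abelian.imageIsoImage f).symm
    have hP : pullback g π ∈ H := by
      refine hext (ShortComplex.mk (kernel.ι (pullback.fst g π)) (pullback.fst g π)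
        (kernel.condition _)) ?_ ?_ hN
      · exact { exact := ShortComplex.exact_of_f_is_kernel _ (kernelIsKernel _) }
      · exact hiso _ _ hker (kernelPullbackFstIso g π).symm
    exact hiso _ _ (hY.2 (pullback g π) (pullback.snd g π) hP) (kernelPullbackSndIso g π)
  · -- extensions
    intro S hS hX1 hX3
    refine ⟨hext S hS hX1.1 hX3.1, ?_⟩
    intro N g hN
    have hK : kernel (g ≫ S.g) ∈ H := hX3.2 N (g ≫ S.g) hN
    haveI := hS.mono_f
    have hcond' : (kernel.ι (g ≫ S.g) ≫ g) ≫ S.g = 0 := by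
      rw [Category.assoc, kernel.condition]
    let h : kernel (g ≫ S.g) ⟶ S.X₁ := hS.exact.lift (kernel.ι (g ≫ S.g) ≫ g) hcond'
    have hkerh : kernel h ∈ H := hX1.2 _ h hK
    have heq : h ≫ S.f = kernel.ι (g ≫ S.g) ≫ g := hS.exact.lift_f _ _
    exact hiso _ _ hkerh
      ((kernelCompMono h S.f).symm ≪≫ kernelIsoOfEq heq ≪≫ kerRestrictIso g S.g)
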